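/- Let n ≥ q ≥ 1 be integers, let v ∈ ℝⁿ have all entries positive, let X ∈ F_v, and let X⊥ be an n×(n−q) real matrix such that (X X⊥) is orthogonal. Then T_X is a linear subspace of ℝ^{n×q} of dimension nq − q(q+1)/2 − n + q. -/

import Mathlib

open Matrix

def skewSub (q : ℕ) : Submodule ℝ (Matrix (Fin q) (Fin q) ℝ) where
  carrier := {Ω | Ωᵀ = -Ω}
  add_mem' := by
    intro a b ha hb
    simp only [Set.mem_setOf_eq] at *
    rw [transpose_add, ha, hb, neg_add]
  zero_mem' := by simp
  smul_mem' := by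
    intro c a ha
    simp only [Set.mem_setOf_eq] at *
    rw [transpose_smul, ha, smul_neg]

def skewIdx (q : ℕ) := {p : Fin q × Fin q // p.1 < p.2}

instance (q : ℕ) : Fintype (skewIdx q) := by unfold skewIdx; infer_instance

noncomputable def skewEquiv (q : ℕ) : skewSub q ≃ₗ[ℝ] (skewIdx q → ℝ) where
  toFun Ω p := Ω.1 p.1.1 p.1.2
  map_add' := by intros; rfl
  map_smul' := by intros; rfl
  invFun f := ⟨fun i j => if h : i < j then f ⟨(i,j), h⟩ else if h : j < i then -f ⟨(j,i), h⟩ else 0, by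
    ext i j
    change (if h : j < i then f ⟨(j,i), h⟩ else if h : i < j then -f ⟨(i,j), h⟩ else 0) = -(if h : i < j then f ⟨(i,j), h⟩ else if h : j < i then -f ⟨(j,i), h⟩ else 0)
    rcases lt_trichotomy i j with h | h | h
    · rw [dif_neg (asymm h), dif_pos h, dif_pos h]
    · subst h; simp
    · rw [dif_pos h, dif_neg (asymm h), dif_pos h, neg_neg]⟩
  left_inv := by
    rintro ⟨Ω, hΩ⟩
    apply Subtype.ext
    funext i j
    have hpt : ∀ a b, Ω b a = -Ω a b := fun a b => congrFun (congrFun hΩ a) b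
    dsimp only
    rcases lt_trichotomy i j with h | h | h
    · rw [dif_pos h]
    · subst h
      rw [dif_neg (lt_irrefl i), dif_neg (lt_irrefl i)]
      have := hpt i i
      linarith
    · rw [dif_neg (asymm h), dif_pos h]; exact (hpt j i).symm
  right_inv := by
    intro f
    funext p
    obtain ⟨⟨i, j⟩, h⟩ := p
    dsimp only
    rw [dif_pos h]

def skewIdxEquiv (q : ℕ) : skewIdx q ≃ (Σ j : Fin q, Fin j.1) where
  toFun p := ⟨p.1.2, ⟨p.1.1.1, p.2⟩⟩
  invFun s := ⟨(⟨s.2.1, lt_trans s.2.2 s.1.2⟩, s.1), s.2.2⟩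
  left_inv := by rintro ⟨⟨⟨i, hi⟩, j⟩, h⟩; rfl
  right_inv := by rintro ⟨j, ⟨i, h⟩⟩; rfl

theorem skew_finrank_mul_two (q : ℕ) :
    Module.finrank ℝ (skewSub q) * 2 = q * (q - 1) := by
  rw [(skewEquiv q).finrank_eq, Module.finrank_pi, Fintype.card_congr (skewIdxEquiv q),
    Fintype.card_sigma]
  simp only [Fintype.card_fin]
  rw [Fin.sum_univ_eq_sum_range (fun i => i) q, Finset.sum_range_id_mul_two]

lemma mem_skewSub {q : ℕ} {Ω : Matrix (Fin q) (Fin q) ℝ} : Ω ∈ skewSub q ↔ Ωᵀ = -Ω := Iff.rfl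


/-- For `X ∈ F_v` and `X⊥` with `(X X⊥)` orthogonal, the set
`T_X = {XΩ + X⊥K : Ωᵀ = −Ω, K (Xᵀv) = 0}` is a linear subspace of `ℝ^{n×q}` of dimension
`nq − q(q+1)/2 − n + q`. -/
theorem stmt_5 (n q : ℕ) (hq : 1 ≤ q) (hnq : q ≤ n)
    (v : Fin n → ℝ) (hv : ∀ i, 0 < v i)
    (X : Matrix (Fin n) (Fin q) ℝ)
    (hX : Xᵀ * X = 1 ∧ ∃ c : Fin q → ℝ, X *ᵥ c = v)
    (Xp : Matrix (Fin n) (Fin (n - q)) ℝ)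
    (hO : (fromCols X Xp)ᵀ * fromCols X Xp = 1) :
    ∃ T : Submodule ℝ (Matrix (Fin n) (Fin q) ℝ),
      (T : Set (Matrix (Fin n) (Fin q) ℝ)) =
        {V | ∃ (Ω : Matrix (Fin q) (Fin q) ℝ) (K : Matrix (Fin (n - q)) (Fin q) ℝ),
          Ωᵀ = -Ω ∧ K *ᵥ (Xᵀ *ᵥ v) = 0 ∧ V = X * Ω + Xp * K} ∧
      (Module.finrank ℝ T : ℤ) =
        (n : ℤ) * q - ((q : ℤ) * (q + 1)) / 2 - n + q := by
  obtain ⟨hXX, c, hc⟩ := hX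
  -- block identities
  rw [← fromBlocks_one, transpose_fromCols, fromRows_mul_fromCols] at hO
  obtain ⟨h11, h12, h21, h22⟩ := fromBlocks_inj.mp hO
  -- the vector w = Xᵀv equals c and is nonzero
  set w : Fin q → ℝ := Xᵀ *ᵥ v with hwdef
  have hwc : w = c := by
    rw [hwdef, ← hc, mulVec_mulVec, hXX, one_mulVec]
  have hwne : w ≠ 0 := by
    intro h0
    have hc0 : c = 0 := by rw [← hwc, h0]
    have hv0 : v = 0 := by rw [← hc, hc0, mulVec_zero]
    have := hv ⟨0, lt_of_lt_of_le hq hnq⟩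
    rw [hv0] at this
    exact lt_irrefl 0 this
  obtain ⟨j, hj⟩ : ∃ j, w j ≠ 0 := by
    by_contra h
    push_neg at h
    exact hwne (funext h)
  -- the linear map K ↦ K w
  let φ : Matrix (Fin (n - q)) (Fin q) ℝ →ₗ[ℝ] (Fin (n - q) → ℝ) :=
    { toFun := fun K => K *ᵥ w
      map_add' := fun a b => add_mulVec a b w
      map_smul' := fun r a => smul_mulVec r a w }
  have hφsurj : Function.Surjective φ := by
    intro y
    refine ⟨fun i k => if k = j then y i / w j else 0, ?_⟩
    show (fun i k => if k = j then y i / w j else 0) *ᵥ w = y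
    funext i
    simp only [mulVec, dotProduct]
    rw [Finset.sum_eq_single j]
    · rw [if_pos rfl, div_mul_cancel₀ _ hj]
    · intro b _ hb; rw [if_neg hb, zero_mul]
    · intro h; exact absurd (Finset.mem_univ j) h
  have hker : (n - q) + Module.finrank ℝ (LinearMap.ker φ) = (n - q) * q := by
    have h1 := LinearMap.finrank_range_add_finrank_ker φ
    rw [LinearMap.range_eq_top.mpr hφsurj, finrank_top, Module.finrank_pi,
      Module.finrank_matrix] at h1
    simpa [Fintype.card_fin] using h1
  -- the linear map (Ω, K) ↦ XΩ + XpK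
  let L : (skewSub q × LinearMap.ker φ) →ₗ[ℝ] Matrix (Fin n) (Fin q) ℝ :=
    { toFun := fun p => X * (p.1 : Matrix (Fin q) (Fin q) ℝ) + Xp * (p.2 : Matrix (Fin (n - q)) (Fin q) ℝ)
      map_add' := by
        rintro ⟨a1, a2⟩ ⟨b1, b2⟩
        simp only [Prod.fst_add, Prod.snd_add, Submodule.coe_add, Matrix.mul_add]
        rw [add_add_add_comm, add_assoc]
      map_smul' := by
        rintro r ⟨a1, a2⟩
        simp only [Prod.smul_fst, Prod.smul_snd, Submodule.coe_smul, RingHom.id_apply,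
          Matrix.mul_smul, smul_add] }
  have hLinj : Function.Injective L := by
    rw [injective_iff_map_eq_zero]
    rintro ⟨⟨Ω, hΩ⟩, ⟨K, hK⟩⟩ h0
    have h0' : X * Ω + Xp * K = 0 := h0
    have hΩ0 : Ω = 0 := by
      have h : Xᵀ * (X * Ω + Xp * K) = Ω := by
        rw [Matrix.mul_add, ← Matrix.mul_assoc, ← Matrix.mul_assoc, hXX, h12, Matrix.one_mul, Matrix.zero_mul, add_zero]
      rw [h0', Matrix.mul_zero] at h
      exact h.symm
    have hK0 : K = 0 := by
      have h : Xpᵀ * (X * Ω + Xp * K) = K := by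
        rw [Matrix.mul_add, ← Matrix.mul_assoc, ← Matrix.mul_assoc, h21, h22, Matrix.one_mul, Matrix.zero_mul, zero_add]
      rw [h0', Matrix.mul_zero] at h
      exact h.symm
    refine Prod.ext (Subtype.ext hΩ0) (Subtype.ext hK0)
  refine ⟨LinearMap.range L, ?_, ?_⟩
  · ext V
    simp only [SetLike.mem_coe, LinearMap.mem_range, Set.mem_setOf_eq]
    constructor
    · rintro ⟨⟨⟨Ω, hΩ⟩, ⟨K, hK⟩⟩, rfl⟩
      exact ⟨Ω, K, hΩ, LinearMap.mem_ker.mp hK, rfl⟩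
    · rintro ⟨Ω, K, hΩ, hK, rfl⟩
      exact ⟨⟨⟨Ω, hΩ⟩, ⟨K, LinearMap.mem_ker.mpr hK⟩⟩, rfl⟩
  · have e1 : Module.finrank ℝ (LinearMap.range L) =
        Module.finrank ℝ (skewSub q × LinearMap.ker φ) :=
      ((LinearEquiv.ofInjective L hLinj).finrank_eq).symm
    rw [e1, Module.finrank_prod]
    have hA := skew_finrank_mul_two q
    set d1 := Module.finrank ℝ (skewSub q)
    set d2 := Module.finrank ℝ (LinearMap.ker φ)
    have hq' : (1 : ℤ) ≤ (q : ℤ) := by exact_mod_cast hq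
    have hnq' : (q : ℤ) ≤ (n : ℤ) := by exact_mod_cast hnq
    have hA' : (d1 : ℤ) * 2 = (q : ℤ) * ((q : ℤ) - 1) := by
      have := congrArg (Nat.cast : ℕ → ℤ) hA
      push_cast [Nat.cast_sub hq] at this
      linarith [this]
    have hB' : ((n : ℤ) - q) + (d2 : ℤ) = ((n : ℤ) - q) * q := by
      have := congrArg (Nat.cast : ℕ → ℤ) hker
      push_cast [Nat.cast_sub hnq] at this
      linarith [this]
    have hdvd : (2 : ℤ) ∣ (q : ℤ) * ((q : ℤ) + 1) := (Int.even_mul_succ_self (q : ℤ)).two_dvd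
    have ht : 2 * ((q : ℤ) * ((q : ℤ) + 1) / 2) = (q : ℤ) * ((q : ℤ) + 1) :=
      Int.mul_ediv_cancel' hdvd
    push_cast
    nlinarith [hA', hB', ht]
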